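/- arXiv:1411.1380 — 5 statements merged into one kernel-verified Lean document; each statement's English description precedes it below -/
import Mathlib

section
/- Let N, W be positive integers with gcd(N, W) = 1, W ≤ N, and let g be the N-periodic indicator of {0,...,W-1}. If x, x' : Z/NZ → C satisfy Σ_{n=m-W+1}^{m} |x[n]|² = Σ_{n=m-W+1}^{m} |x'[n]|² for all m ∈ Z/NZ (indices mod N), then |x[n]| = |x'[n]| for all n. -/
open Finset

/-- Magnitude recovery: if `gcd(N,W)=1`, `W ≤ N`, and the sliding sums of `|x|²` over every
length-`W` window agree with those of `|x'|²`, then `|x[n]| = |x'[n]|` for all `n`. -/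
theorem abs_eq_of_window_energy_eq (N W : ℕ) (hW : 0 < W) (hWN : W ≤ N)
    (hcop : Nat.Coprime N W) [NeZero N] (x x' : ZMod N → ℂ)
    (h : ∀ m : ZMod N,
      ∑ j ∈ Finset.range W, ‖x (m - (j : ZMod N))‖ ^ 2 =
        ∑ j ∈ Finset.range W, ‖x' (m - (j : ZMod N))‖ ^ 2) :
    ∀ n : ZMod N, ‖x n‖ = ‖x' n‖ := by
  set f : ZMod N → ℝ := fun n => ‖x n‖ ^ 2 - ‖x' n‖ ^ 2 with hf
  have hS : ∀ m : ZMod N, ∑ j ∈ Finset.range W, f (m - (j : ZMod N)) = 0 := by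
    intro m
    simp only [hf, Finset.sum_sub_distrib]
    rw [h m]; ring
  have hshift : ∀ m : ZMod N, f m = f (m - (W : ZMod N)) := by
    intro m
    have h1 : ∑ j ∈ Finset.range (W + 1), f (m - (j : ZMod N)) = f (m - (W : ZMod N)) := by
      rw [Finset.sum_range_succ, hS m]; ring
    have h2 : ∑ j ∈ Finset.range (W + 1), f (m - (j : ZMod N)) = f m := by
      rw [Finset.sum_range_succ']
      have : ∑ j ∈ Finset.range W, f (m - ((j + 1 : ℕ) : ZMod N)) =
          ∑ j ∈ Finset.range W, f ((m - 1) - (j : ZMod N)) := by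
        apply Finset.sum_congr rfl
        intro j _
        congr 1
        push_cast
        ring
      rw [this, hS (m - 1)]
      simp
    rw [← h2, h1]
  have hiter : ∀ k : ℕ, ∀ m : ZMod N, f m = f (m - (k : ZMod N) * (W : ZMod N)) := by
    intro k
    induction k with
    | zero => intro m; simp
    | succ k ih =>
      intro m
      rw [hshift m, ih (m - W)]
      congr 1
      push_cast
      ring
  have hconst : ∀ a b : ZMod N, f a = f b := by
    intro a b
    have hunit : (W : ZMod N) * (W : ZMod N)⁻¹ = 1 :=
      ZMod.coe_mul_inv_eq_one W hcop.symm
    set k : ℕ := ((a - b) * (W : ZMod N)⁻¹).val with hk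
    have hkc : ((k : ZMod N)) = (a - b) * (W : ZMod N)⁻¹ := by
      simp [hk, ZMod.natCast_val, ZMod.cast_id]
    have := hiter k a
    rw [hkc] at this
    have heq : a - (a - b) * (W : ZMod N)⁻¹ * (W : ZMod N) = b := by
      have : (a - b) * (W : ZMod N)⁻¹ * (W : ZMod N) = a - b := by
        rw [mul_assoc, mul_comm (W : ZMod N)⁻¹, hunit, mul_one]
      rw [this]; ring
    rwa [heq] at this
  have hzero : ∀ n : ZMod N, f n = 0 := by
    intro n
    have h0 := hS n
    have : ∑ j ∈ Finset.range W, f (n - (j : ZMod N)) = W * f n := by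
      calc ∑ j ∈ Finset.range W, f (n - (j : ZMod N))
          = ∑ _j ∈ Finset.range W, f n :=
            Finset.sum_congr rfl (fun j _ => hconst (n - (j : ZMod N)) n)
        _ = W * f n := by simp [mul_comm]
    rw [this] at h0
    have hWne : (W : ℝ) ≠ 0 := Nat.cast_ne_zero.mpr hW.ne'
    exact (mul_eq_zero.mp h0).resolve_left hWne
  intro n
  have := hzero n
  simp only [hf] at this
  nlinarith [norm_nonneg (x n), norm_nonneg (x' n)]
end

section
/- Let N, W ≥ 2 with N ≥ 2W - 1, let g : Z/NZ → C be supported in the interval [a, a+W-1] (mod N) with g[a] ≠ 0 and g[a+W-1] ≠ 0. Then for every x : Z/NZ → C and every m, the autocorrelation value r_m[W-1] = Σ_{p=0}^{N-1} x[p] g[m-p] · conj(x[p-(W-1)] g[m-p+W-1]) equals x[m-a] g[a] · conj(x[m-a-W+1] g[a+W-1]). -/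
open Complex Finset

/-- The lag-`(W-1)` autocorrelation of the windowed signal collapses to a single term. -/
theorem autocorrelation_collapse (N W : ℕ) (hW : 2 ≤ W) (hN : 2 * W - 1 ≤ N) [NeZero N]
    (a : ZMod N) (g : ZMod N → ℂ)
    (hsupp : ∀ n : ZMod N, g n ≠ 0 → ∃ j : ℕ, j < W ∧ n = a + (j : ZMod N))
    (ha : g a ≠ 0) (hb : g (a + ((W - 1 : ℕ) : ZMod N)) ≠ 0) :
    ∀ (x : ZMod N → ℂ) (m : ZMod N),
      ∑ p : ZMod N, x p * g (m - p) *
          (starRingEnd ℂ) (x (p - ((W - 1 : ℕ) : ZMod N)) * g (m - p + ((W - 1 : ℕ) : ZMod N))) =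
        x (m - a) * g a *
          (starRingEnd ℂ) (x (m - a - ((W - 1 : ℕ) : ZMod N)) * g (a + ((W - 1 : ℕ) : ZMod N))) := by
  intro x m
  rw [Finset.sum_eq_single_of_mem (m - a) (Finset.mem_univ _)]
  · simp
  · intro p _ hp
    by_contra h
    have h1 : g (m - p) ≠ 0 := by
      intro h0; apply h; simp [h0]
    have h2 : g (m - p + ((W - 1 : ℕ) : ZMod N)) ≠ 0 := by
      intro h0; apply h; simp [h0]
    obtain ⟨j, hj, hje⟩ := hsupp _ h1
    obtain ⟨k, hk, hke⟩ := hsupp _ h2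
    rw [hje] at hke
    have hcast : ((j + (W - 1) : ℕ) : ZMod N) = ((k : ℕ) : ZMod N) := by
      push_cast
      have := hke
      rw [add_assoc] at this
      exact add_left_cancel this
    have hjk : j + (W - 1) = k := by
      have hlt1 : j + (W - 1) < N := by omega
      have hlt2 : k < N := by omega
      have := congrArg ZMod.val hcast
      rwa [ZMod.val_cast_of_lt hlt1, ZMod.val_cast_of_lt hlt2] at this
    have hj0 : j = 0 := by omega
    apply hp
    rw [hj0] at hje
    simp at hje
    rw [← hje, sub_sub_cancel]
end

section
/- Let g : Z/NZ → C be a window supported in an interval of length W ≥ 2, with N ≥ 2W-1, gcd(N, W-1) = 1, and such that the length-N DFT of n ↦ |g[n]|² is nowhere vanishing. If x, x' : Z/NZ → C are both nowhere vanishing and |X_g(m,k)| = |X'_g(m,k)| for all m, k ∈ {0,...,N-1}, where X_g(m,k) = Σ_{n=0}^{N-1} x[n] g[m-n] e^{-2πi kn/N}, then there exists c ∈ C with |c| = 1 such that x'[n] = c · x[n] for all n. -/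
open Complex Finset

/-- The STFT with hop length `L = 1`. -/
noncomputable def stft1 (N : ℕ) [NeZero N] (g x : ZMod N → ℂ) (m k : ZMod N) : ℂ :=
  ∑ n : ZMod N, x n * g (m - n) *
    Complex.exp (-2 * (Real.pi : ℂ) * Complex.I * (k.val : ℂ) * (n.val : ℂ) / (N : ℂ))

set_option linter.unusedSectionVars false

namespace StftPR

variable {N : ℕ} [NeZero N]

lemma sum_zmod_val (f : ℕ → ℂ) : ∑ k : ZMod N, f k.val = ∑ i ∈ Finset.range N, f i := by
  obtain ⟨M, rfl⟩ := Nat.exists_eq_succ_of_ne_zero (NeZero.ne N)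
  exact Fin.sum_univ_eq_sum_range (fun i => f i) (M + 1)

noncomputable def zch (N : ℕ) [NeZero N] (t : ZMod N) : ℂ :=
  Complex.exp (2 * (Real.pi : ℂ) * Complex.I / N) ^ t.val

lemma zeta_pow_N : Complex.exp (2 * (Real.pi : ℂ) * Complex.I / N) ^ N = 1 := by
  rw [← Complex.exp_nat_mul]
  have hN : (N : ℂ) ≠ 0 := Nat.cast_ne_zero.mpr (NeZero.ne N)
  rw [show (N : ℂ) * (2 * (Real.pi : ℂ) * Complex.I / N) = 2 * Real.pi * Complex.I by
    field_simp]
  exact Complex.exp_two_pi_mul_I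

lemma zeta_pow_mod (x : ℕ) :
    Complex.exp (2 * (Real.pi : ℂ) * Complex.I / N) ^ (x % N) =
    Complex.exp (2 * (Real.pi : ℂ) * Complex.I / N) ^ x := by
  conv_rhs => rw [← Nat.div_add_mod x N]
  rw [pow_add, pow_mul, zeta_pow_N, one_pow, one_mul]

lemma zch_add (s t : ZMod N) : zch N (s + t) = zch N s * zch N t := by
  rw [zch, zch, zch, ZMod.val_add, zeta_pow_mod, pow_add]

lemma zch_zero : zch N 0 = 1 := by rw [zch, ZMod.val_zero, pow_zero]

lemma zch_mul_neg (t : ZMod N) : zch N t * zch N (-t) = 1 := by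
  rw [← zch_add, add_neg_cancel, zch_zero]

lemma conj_zch (t : ZMod N) : (starRingEnd ℂ) (zch N t) = zch N (-t) := by
  have h1 : (starRingEnd ℂ) (Complex.exp (2 * (Real.pi : ℂ) * Complex.I / N)) =
      (Complex.exp (2 * (Real.pi : ℂ) * Complex.I / N))⁻¹ := by
    rw [← Complex.exp_conj, ← Complex.exp_neg]
    congr 1
    simp [map_div₀, map_mul, map_ofNat, Complex.conj_I]
    ring
  have h2 : zch N t * zch N (-t) = 1 := zch_mul_neg t
  rw [zch, map_pow, h1, inv_pow]
  field_simp
  rw [← zch]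
  linear_combination -h2

lemma zch_orth (d : ZMod N) : ∑ k : ZMod N, zch N (k * d) = if d = 0 then (N : ℂ) else 0 := by
  have hexp : ∀ k : ZMod N, zch N (k * d) =
      (Complex.exp (2 * (Real.pi : ℂ) * Complex.I / N) ^ d.val) ^ k.val := by
    intro k
    rw [zch, ZMod.val_mul, zeta_pow_mod, mul_comm k.val, pow_mul]
  simp_rw [hexp]
  rw [sum_zmod_val (fun i => (Complex.exp (2 * (Real.pi : ℂ) * Complex.I / N) ^ d.val) ^ i)]
  by_cases hd : d = 0
  · simp [hd]
  · rw [if_neg hd]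
    have hprim : IsPrimitiveRoot (Complex.exp (2 * (Real.pi : ℂ) * Complex.I / N)) N :=
      Complex.isPrimitiveRoot_exp N (NeZero.ne N)
    have hne1 : Complex.exp (2 * (Real.pi : ℂ) * Complex.I / N) ^ d.val ≠ 1 := by
      apply hprim.pow_ne_one_of_pos_of_lt
      · exact (fun h => hd (by rwa [← ZMod.val_eq_zero]))
      · exact ZMod.val_lt d
    rw [geom_sum_eq hne1, ← pow_mul, mul_comm d.val, pow_mul, zeta_pow_N, one_pow,
      sub_self, zero_div]

lemma zch_kernel (k n : ZMod N) :
    Complex.exp (-2 * (Real.pi : ℂ) * Complex.I * (k.val : ℂ) * (n.val : ℂ) / (N : ℂ)) =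
    zch N (-(k * n)) := by
  rw [← conj_zch, zch, ZMod.val_mul, zeta_pow_mod, ← Complex.exp_nat_mul, ← Complex.exp_conj]
  congr 1
  simp only [map_mul, map_div₀, map_ofNat, Complex.conj_natCast, Complex.conj_I,
    Complex.conj_ofReal]
  push_cast
  ring

lemma stft1_eq (g x : ZMod N → ℂ) (m k : ZMod N) :
    stft1 N g x m k = ∑ n : ZMod N, x n * g (m - n) * zch N (-(k * n)) := by
  unfold stft1
  exact Finset.sum_congr rfl fun n _ => by rw [zch_kernel]

lemma autocorr (g x : ZMod N → ℂ) (m ℓ : ZMod N) :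
    ∑ k : ZMod N, (stft1 N g x m k * (starRingEnd ℂ) (stft1 N g x m k)) * zch N (k * ℓ)
    = (N : ℂ) * ∑ n : ZMod N,
        x n * (starRingEnd ℂ) (x (n - ℓ)) * (g (m - n) * (starRingEnd ℂ) (g (m - n + ℓ))) := by
  have step1 : ∀ k : ZMod N, (stft1 N g x m k * (starRingEnd ℂ) (stft1 N g x m k)) * zch N (k * ℓ)
      = ∑ n : ZMod N, ∑ p : ZMod N,
          (x n * g (m - n) * ((starRingEnd ℂ) (x p) * (starRingEnd ℂ) (g (m - p))))
            * zch N (k * (p + ℓ - n)) := by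
    intro k
    rw [stft1_eq, map_sum, Finset.sum_mul_sum, Finset.sum_mul]
    refine Finset.sum_congr rfl fun n _ => ?_
    rw [Finset.sum_mul]
    refine Finset.sum_congr rfl fun p _ => ?_
    rw [map_mul, map_mul, conj_zch, neg_neg]
    have hz : zch N (k * (p + ℓ - n)) = zch N (k * p) * zch N (k * ℓ) * zch N (-(k * n)) := by
      rw [← zch_add, ← zch_add]
      congr 1
      ring
    rw [hz]
    ring
  calc ∑ k : ZMod N, (stft1 N g x m k * (starRingEnd ℂ) (stft1 N g x m k)) * zch N (k * ℓ)
      = ∑ k : ZMod N, ∑ n : ZMod N, ∑ p : ZMod N,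
          (x n * g (m - n) * ((starRingEnd ℂ) (x p) * (starRingEnd ℂ) (g (m - p))))
            * zch N (k * (p + ℓ - n)) := Finset.sum_congr rfl fun k _ => step1 k
    _ = ∑ n : ZMod N, ∑ p : ZMod N,
          (x n * g (m - n) * ((starRingEnd ℂ) (x p) * (starRingEnd ℂ) (g (m - p))))
            * ∑ k : ZMod N, zch N (k * (p + ℓ - n)) := by
        rw [Finset.sum_comm]
        refine Finset.sum_congr rfl fun n _ => ?_
        rw [Finset.sum_comm]
        refine Finset.sum_congr rfl fun p _ => ?_
        rw [Finset.mul_sum]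
    _ = ∑ n : ZMod N,
          (x n * g (m - n) * ((starRingEnd ℂ) (x (n - ℓ)) * (starRingEnd ℂ) (g (m - (n - ℓ)))))
            * (N : ℂ) := by
        refine Finset.sum_congr rfl fun n _ => ?_
        simp_rw [zch_orth]
        have hcond : ∀ p : ZMod N,
            (if p + ℓ - n = 0 then (N : ℂ) else 0) = if p = n - ℓ then (N : ℂ) else 0 := by
          intro p
          refine if_congr ?_ rfl rfl
          constructor <;> intro h
          · linear_combination h
          · linear_combination h
        simp_rw [hcond, mul_ite, mul_zero]
        simp
    _ = (N : ℂ) * ∑ n : ZMod N,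
          x n * (starRingEnd ℂ) (x (n - ℓ)) * (g (m - n) * (starRingEnd ℂ) (g (m - n + ℓ))) := by
        rw [← Finset.sum_mul, mul_comm]
        congr 1
        refine Finset.sum_congr rfl fun n _ => ?_
        have : m - (n - ℓ) = m - n + ℓ := by ring
        rw [this]
        ring

end StftPR

/-- Uniqueness of STFT phase retrieval (hop `L = 1`) for nonvanishing signals:
if `g` is supported in an interval `[a, a+W-1]` with nonzero endpoint values (so the window
length is exactly `W ≥ 2`), `N ≥ 2W-1`, `gcd(N, W-1) = 1`, and the DFT of `|g|²` is nowhere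
vanishing, then equal STFT magnitudes imply equality up to a unimodular global phase. -/
theorem stft_phase_retrieval_uniqueness (N W : ℕ) (hW : 2 ≤ W) (hN : 2 * W - 1 ≤ N) [NeZero N]
    (hcop : Nat.Coprime N (W - 1)) (a : ZMod N) (g : ZMod N → ℂ)
    (hsupp : ∀ n : ZMod N, g n ≠ 0 → ∃ j : ℕ, j < W ∧ n = a + (j : ZMod N))
    (ha : g a ≠ 0) (hb : g (a + ((W - 1 : ℕ) : ZMod N)) ≠ 0)
    (hdft : ∀ k : ZMod N,
      (∑ n : ZMod N, (‖g n‖ ^ 2 : ℂ) *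
        Complex.exp (-2 * (Real.pi : ℂ) * Complex.I * (k.val : ℂ) * (n.val : ℂ) / (N : ℂ))) ≠ 0)
    (x x' : ZMod N → ℂ) (hx : ∀ n, x n ≠ 0) (hx' : ∀ n, x' n ≠ 0)
    (hmag : ∀ m k : ZMod N, ‖stft1 N g x m k‖ = ‖stft1 N g x' m k‖) :
    ∃ c : ℂ, ‖c‖ = 1 ∧ ∀ n : ZMod N, x' n = c * x n := by
  classical
  set L : ZMod N := ((W - 1 : ℕ) : ZMod N) with hLdef
  have hNne : (N : ℂ) ≠ 0 := Nat.cast_ne_zero.mpr (NeZero.ne N)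
  -- magnitudes as products with conjugates
  have hmag2 : ∀ m k : ZMod N,
      stft1 N g x m k * (starRingEnd ℂ) (stft1 N g x m k)
        = stft1 N g x' m k * (starRingEnd ℂ) (stft1 N g x' m k) := by
    intro m k
    rw [Complex.mul_conj, Complex.mul_conj]
    norm_cast
    rw [Complex.normSq_eq_norm_sq, Complex.normSq_eq_norm_sq, hmag]
  -- the lag-correlation identity
  have core : ∀ m ℓ : ZMod N,
      (∑ n : ZMod N, x n * (starRingEnd ℂ) (x (n - ℓ)) *
        (g (m - n) * (starRingEnd ℂ) (g (m - n + ℓ))))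
      = ∑ n : ZMod N, x' n * (starRingEnd ℂ) (x' (n - ℓ)) *
        (g (m - n) * (starRingEnd ℂ) (g (m - n + ℓ))) := by
    intro m ℓ
    refine mul_left_cancel₀ hNne ?_
    rw [← StftPR.autocorr g x m ℓ, ← StftPR.autocorr g x' m ℓ]
    exact Finset.sum_congr rfl fun k _ => by rw [hmag2]
  -- Step 1 : equal pointwise magnitudes of x and x'
  have hG0 : ∀ m : ZMod N,
      ∑ n : ZMod N, (x n * (starRingEnd ℂ) (x n) - x' n * (starRingEnd ℂ) (x' n)) *
        (g (m - n) * (starRingEnd ℂ) (g (m - n))) = 0 := by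
    intro m
    have h0 := core m 0
    simp only [sub_zero, add_zero] at h0
    simp only [sub_mul]
    rw [Finset.sum_sub_distrib, h0, sub_self]
  set h : ZMod N → ℂ := fun n => x n * (starRingEnd ℂ) (x n) - x' n * (starRingEnd ℂ) (x' n)
    with hhdef
  have hGhat : ∀ k : ZMod N,
      (∑ u : ZMod N, (g u * (starRingEnd ℂ) (g u)) * StftPR.zch N (-(k * u))) ≠ 0 := by
    intro k
    have := hdft k
    convert this using 2 with u
    rw [StftPR.zch_kernel, Complex.mul_conj, Complex.normSq_eq_norm_sq]
    norm_cast
  have hHhat : ∀ k : ZMod N, (∑ n : ZMod N, h n * StftPR.zch N (-(k * n))) = 0 := by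
    intro k
    have key : ∀ n : ZMod N,
        (∑ m : ZMod N, (g (m - n) * (starRingEnd ℂ) (g (m - n))) * StftPR.zch N (-(k * m)))
        = StftPR.zch N (-(k * n)) *
            ∑ u : ZMod N, (g u * (starRingEnd ℂ) (g u)) * StftPR.zch N (-(k * u)) := by
      intro n
      rw [← Equiv.sum_comp (Equiv.addRight n)
        (fun m => (g (m - n) * (starRingEnd ℂ) (g (m - n))) * StftPR.zch N (-(k * m))),
        Finset.mul_sum]
      refine Finset.sum_congr rfl fun u _ => ?_
      simp only [Equiv.coe_addRight, add_sub_cancel_right]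
      have hz : StftPR.zch N (-(k * (u + n)))
          = StftPR.zch N (-(k * u)) * StftPR.zch N (-(k * n)) := by
        rw [← StftPR.zch_add]
        congr 1
        ring
      rw [hz]
      ring
    have hprod : (∑ n : ZMod N, h n * StftPR.zch N (-(k * n))) *
        (∑ u : ZMod N, (g u * (starRingEnd ℂ) (g u)) * StftPR.zch N (-(k * u))) = 0 := by
      have hswap : (∑ m : ZMod N,
            (∑ n : ZMod N, h n * (g (m - n) * (starRingEnd ℂ) (g (m - n)))) *
              StftPR.zch N (-(k * m)))
          = (∑ n : ZMod N, h n * StftPR.zch N (-(k * n))) *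
            (∑ u : ZMod N, (g u * (starRingEnd ℂ) (g u)) * StftPR.zch N (-(k * u))) := by
        simp_rw [Finset.sum_mul]
        rw [Finset.sum_comm]
        calc ∑ n : ZMod N, ∑ m : ZMod N,
              h n * (g (m - n) * (starRingEnd ℂ) (g (m - n))) * StftPR.zch N (-(k * m))
            = ∑ n : ZMod N, h n *
                ∑ m : ZMod N, (g (m - n) * (starRingEnd ℂ) (g (m - n))) *
                  StftPR.zch N (-(k * m)) := by
              refine Finset.sum_congr rfl fun n _ => ?_
              rw [Finset.mul_sum]
              exact Finset.sum_congr rfl fun m _ => by ring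
          _ = ∑ n : ZMod N, h n * (StftPR.zch N (-(k * n)) *
                ∑ u : ZMod N, (g u * (starRingEnd ℂ) (g u)) * StftPR.zch N (-(k * u))) := by
              simp_rw [key]
          _ = ∑ n : ZMod N, h n * StftPR.zch N (-(k * n)) *
                ∑ u : ZMod N, (g u * (starRingEnd ℂ) (g u)) * StftPR.zch N (-(k * u)) := by
              exact Finset.sum_congr rfl fun n _ => by ring
      rw [← hswap]
      refine Finset.sum_eq_zero fun m _ => ?_
      rw [hG0 m, zero_mul]
    exact (mul_eq_zero.mp hprod).resolve_right (hGhat k)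
  have hzero : ∀ n : ZMod N, h n = 0 := by
    intro n
    have hinv : (∑ k : ZMod N, (∑ p : ZMod N, h p * StftPR.zch N (-(k * p))) *
        StftPR.zch N (k * n)) = h n * (N : ℂ) := by
      simp_rw [Finset.sum_mul]
      rw [Finset.sum_comm]
      have hterm : ∀ p : ZMod N,
          (∑ k : ZMod N, h p * StftPR.zch N (-(k * p)) * StftPR.zch N (k * n))
          = h p * ∑ k : ZMod N, StftPR.zch N (k * (n - p)) := by
        intro p
        rw [Finset.mul_sum]
        refine Finset.sum_congr rfl fun k _ => ?_
        have hz : StftPR.zch N (k * (n - p))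
            = StftPR.zch N (-(k * p)) * StftPR.zch N (k * n) := by
          rw [← StftPR.zch_add]
          congr 1
          ring
        rw [hz]
        ring
      simp_rw [hterm, StftPR.zch_orth]
      have hcond : ∀ p : ZMod N,
          (if n - p = 0 then (N : ℂ) else 0) = if p = n then (N : ℂ) else 0 := by
        intro p
        refine if_congr ?_ rfl rfl
        constructor <;> intro hh
        · linear_combination -hh
        · linear_combination -hh
      simp_rw [hcond, mul_ite, mul_zero]
      simp
    have : h n * (N : ℂ) = 0 := by
      rw [← hinv]
      refine Finset.sum_eq_zero fun k _ => ?_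
      rw [hHhat k, zero_mul]
    exact (mul_eq_zero.mp this).resolve_right hNne
  have hnorm : ∀ n : ZMod N, ‖x' n‖ = ‖x n‖ := by
    intro n
    have h1 := hzero n
    rw [hhdef] at h1
    simp only [sub_eq_zero] at h1
    rw [Complex.mul_conj, Complex.mul_conj] at h1
    have h2 : Complex.normSq (x n) = Complex.normSq (x' n) := by exact_mod_cast h1
    rw [Complex.norm_def, Complex.norm_def, h2]
  -- Step 2 : relative phase propagation at lag W-1
  have hb' : (starRingEnd ℂ) (g (a + L)) ≠ 0 := by
    simpa using hb
  have hC : g a * (starRingEnd ℂ) (g (a + L)) ≠ 0 := mul_ne_zero ha hb'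
  have hsingle : ∀ (y : ZMod N → ℂ) (n : ZMod N),
      (∑ p : ZMod N, y p * (starRingEnd ℂ) (y (p - L)) *
        (g (n + a - p) * (starRingEnd ℂ) (g (n + a - p + L))))
      = y n * (starRingEnd ℂ) (y (n - L)) * (g a * (starRingEnd ℂ) (g (a + L))) := by
    intro y n
    rw [Finset.sum_eq_single n]
    · have h1 : n + a - n = a := by ring
      rw [h1]
    · intro p _ hp
      suffices hzero : g (n + a - p) * (starRingEnd ℂ) (g (n + a - p + L)) = 0 by
        rw [hzero, mul_zero]
      by_contra hne
      have hg1 : g (n + a - p) ≠ 0 := fun hc => hne (by rw [hc, zero_mul])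
      have hg2 : g (n + a - p + L) ≠ 0 := by
        intro hc
        apply hne
        rw [hc, map_zero, mul_zero]
      obtain ⟨j, hjW, hj⟩ := hsupp _ hg1
      obtain ⟨j', hj'W, hj'⟩ := hsupp _ hg2
      have heq : ((j + (W - 1) : ℕ) : ZMod N) = ((j' : ℕ) : ZMod N) := by
        push_cast
        have : a + (j : ZMod N) + L = a + (j' : ZMod N) := by
          rw [← hj, ← hj']
        have h2 : (j : ZMod N) + L = (j' : ZMod N) := by
          have := congrArg (fun z => z - a) this
          simpa [add_sub_cancel_left] using by linear_combination this
        rw [hLdef] at h2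
        push_cast at h2
        have hcast : ((W - 1 : ℕ) : ZMod N) = (W : ZMod N) - 1 := by
          have : (W - 1) + 1 = W := by omega
          calc ((W - 1 : ℕ) : ZMod N) = ((W - 1 + 1 : ℕ) : ZMod N) - 1 := by push_cast; ring
            _ = (W : ZMod N) - 1 := by rw [this]
        rw [hcast] at h2 ⊢
        linear_combination h2
      rw [ZMod.natCast_eq_natCast_iff] at heq
      have hlt1 : j + (W - 1) < N := by omega
      have hlt2 : j' < N := by omega
      have heq' : j + (W - 1) = j' := by
        have hmm : (j + (W - 1)) % N = j' % N := heq
        rwa [Nat.mod_eq_of_lt hlt1, Nat.mod_eq_of_lt hlt2] at hmm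
      have hj0 : j = 0 := by omega
      apply hp
      rw [hj0] at hj
      simp only [Nat.cast_zero, add_zero] at hj
      linear_combination -hj
    · intro hn
      exact absurd (Finset.mem_univ n) hn
  have hL : ∀ n : ZMod N,
      x' n * (starRingEnd ℂ) (x' (n - L)) = x n * (starRingEnd ℂ) (x (n - L)) := by
    intro n
    have hc := core (n + a) L
    rw [hsingle x n, hsingle x' n] at hc
    exact (mul_right_cancel₀ hC hc).symm
  -- Step 3 : the ratio is a constant unimodular factor
  set r : ZMod N → ℂ := fun n => x' n / x n with hrdef
  have hrnorm : ∀ n : ZMod N, ‖r n‖ = 1 := by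
    intro n
    rw [hrdef]
    simp only [norm_div]
    rw [hnorm n, div_self (norm_ne_zero_iff.mpr (hx n))]
  have hrne : ∀ n : ZMod N, r n ≠ 0 := fun n => by
    intro hc
    have := hrnorm n
    rw [hc, norm_zero] at this
    norm_num at this
  have hstep : ∀ n : ZMod N, r n = r (n - L) := by
    intro n
    have key : r n * (starRingEnd ℂ) (r (n - L)) = 1 := by
      rw [hrdef]
      simp only [map_div₀]
      rw [div_mul_div_comm, hL n, div_self]
      exact mul_ne_zero (hx n) (fun hc => hx (n - L) (by
        have := hc
        rwa [map_eq_zero] at this))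
    have hconj : (starRingEnd ℂ) (r (n - L)) = (r (n - L))⁻¹ :=
      (Complex.inv_eq_conj (hrnorm (n - L))).symm
    rw [hconj] at key
    field_simp at key
    exact (div_eq_one_iff_eq (hrne (n - L))).mp key
  have hshift : ∀ t : ZMod N, r (t + L) = r t := by
    intro t
    have := hstep (t + L)
    rwa [add_sub_cancel_right] at this
  have hpow : ∀ j : ℕ, r ((j : ZMod N) * L) = r 0 := by
    intro j
    induction j with
    | zero => simp
    | succ j ih =>
      have : ((j + 1 : ℕ) : ZMod N) * L = (j : ZMod N) * L + L := by push_cast; ring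
      rw [this, hshift, ih]
  have hconst : ∀ n : ZMod N, r n = r 0 := by
    intro n
    have hu : IsUnit L := by
      rw [hLdef, ZMod.isUnit_iff_coprime]
      exact hcop.symm
    obtain ⟨u, hu⟩ := hu
    have ht : (((n * ↑u⁻¹ : ZMod N).val : ℕ) : ZMod N) * L = n := by
      rw [ZMod.natCast_zmod_val, ← hu, mul_assoc]
      simp
    calc r n = r ((((n * ↑u⁻¹ : ZMod N).val : ℕ) : ZMod N) * L) := by rw [ht]
      _ = r 0 := hpow _
  refine ⟨r 0, hrnorm 0, fun n => ?_⟩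
  rw [← hconst n, hrdef]
  exact (div_mul_cancel₀ (x' n) (hx n)).symm
end

section
/- Let N, W, L, g, and intervals [a₁,b₁], [a₂,b₂] be as in the separated-support setting (separations at least W mod N), with x supported on [a₁,b₁] and y on [a₂,b₂]. Then for every m, the windowed signal n ↦ (x[n] + y[n]) g[mL-n] equals either n ↦ x[n] g[mL-n], or n ↦ y[n] g[mL-n], or is identically zero. -/
open Finset

/-- Support-disjointness lemma: with `x` and `y` supported on two nonoverlapping intervals of
`{0,...,N-1}` whose circular separations are at least the window length `W`, each windowed
section of `x + y` equals the corresponding windowed section of `x`, or of `y`, or is zero. -/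
theorem windowed_section_trichotomy (N W L : ℕ) (hN : 0 < N) [NeZero N] (hW : 0 < W)
    (hL : 0 < L) (aW : ZMod N) (g : ZMod N → ℂ)
    (hsupp : ∀ n : ZMod N, g n ≠ 0 → ∃ j : ℕ, j < W ∧ n = aW + (j : ZMod N))
    (a₁ b₁ a₂ b₂ : ℕ) (h₁ : a₁ ≤ b₁) (h₁' : b₁ ≤ N - 1) (h₂ : a₂ ≤ b₂) (h₂' : b₂ ≤ N - 1)
    (hdisj : Disjoint (Finset.Icc a₁ b₁) (Finset.Icc a₂ b₂))
    (hsep₁ : (W : ℤ) ≤ ((a₂ : ℤ) - (b₁ : ℤ)) % (N : ℤ))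
    (hsep₂ : (W : ℤ) ≤ ((a₁ : ℤ) - (b₂ : ℤ)) % (N : ℤ))
    (x y : ZMod N → ℂ)
    (hx : ∀ n : ZMod N, x n ≠ 0 → ∃ t : ℕ, a₁ ≤ t ∧ t ≤ b₁ ∧ n = (t : ZMod N))
    (hy : ∀ n : ZMod N, y n ≠ 0 → ∃ t : ℕ, a₂ ≤ t ∧ t ≤ b₂ ∧ n = (t : ZMod N)) :
    ∀ m : ℕ,
      (∀ n : ZMod N, (x n + y n) * g (((m * L : ℕ) : ZMod N) - n)
          = x n * g (((m * L : ℕ) : ZMod N) - n)) ∨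
      (∀ n : ZMod N, (x n + y n) * g (((m * L : ℕ) : ZMod N) - n)
          = y n * g (((m * L : ℕ) : ZMod N) - n)) ∨
      (∀ n : ZMod N, (x n + y n) * g (((m * L : ℕ) : ZMod N) - n) = 0) := by
  intro m
  set c : ZMod N := ((m * L : ℕ) : ZMod N) with hc
  by_cases hY : ∀ n : ZMod N, y n * g (c - n) = 0
  · left; intro n; rw [add_mul, hY n, add_zero]
  by_cases hX : ∀ n : ZMod N, x n * g (c - n) = 0
  · right; left; intro n; rw [add_mul, hX n, zero_add]
  exfalso
  push_neg at hX hY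
  obtain ⟨n₂, hn₂⟩ := hX
  obtain ⟨n₁, hn₁⟩ := hY
  rw [mul_ne_zero_iff] at hn₁ hn₂
  obtain ⟨t₂, ht₂a, ht₂b, ht₂⟩ := hx n₂ hn₂.1
  obtain ⟨t₁, ht₁a, ht₁b, ht₁⟩ := hy n₁ hn₁.1
  obtain ⟨j₂, hj₂, hgj₂⟩ := hsupp _ hn₂.2
  obtain ⟨j₁, hj₁, hgj₁⟩ := hsupp _ hn₁.2
  rw [ht₂] at hgj₂
  rw [ht₁] at hgj₁
  -- congruence: t₂ + j₂ ≡ t₁ + j₁ mod N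
  have hcong : ((t₂ + j₂ : ℕ) : ZMod N) = ((t₁ + j₁ : ℕ) : ZMod N) := by
    push_cast
    linear_combination hgj₁ - hgj₂
  have hmod : t₂ + j₂ ≡ t₁ + j₁ [MOD N] := (ZMod.natCast_eq_natCast_iff _ _ _).mp hcong
  have hdvd : (N : ℤ) ∣ ((t₁ + j₁ : ℕ) : ℤ) - ((t₂ + j₂ : ℕ) : ℤ) :=
    Nat.modEq_iff_dvd.mp hmod
  obtain ⟨k, hk⟩ := hdvd
  -- W < N
  have hWN : (W : ℤ) < N := lt_of_le_of_lt hsep₁ (Int.emod_lt_of_pos _ (by exact_mod_cast hN))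
  -- disjointness of the intervals
  have hcase : b₁ < a₂ ∨ b₂ < a₁ := by
    by_contra h
    push_neg at h
    exact Finset.disjoint_left.mp hdisj
      (Finset.mem_Icc.mpr ⟨le_max_left _ _, max_le h₁ h.1⟩)
      (Finset.mem_Icc.mpr ⟨le_max_right _ _, max_le h.2 h₂⟩)
  -- bound k ∈ {-1, 0, 1}
  have hNpos : (0 : ℤ) < N := by exact_mod_cast hN
  have hb₁N : b₁ < N := by omega
  have hb₂N : b₂ < N := by omega
  have hkbound : k = -1 ∨ k = 0 ∨ k = 1 := by
    have h1 : (N : ℤ) * k < 2 * N := by push_cast at hk ⊢; omega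
    have h2 : -(2 * (N : ℤ)) < N * k := by push_cast at hk ⊢; omega
    have hk2 : k < 2 := by nlinarith
    have hk3 : -2 < k := by nlinarith
    omega
  rcases hcase with hcs | hcs
  · -- b₁ < a₂ : a₂ - b₁ is in [0, N), a₁ - b₂ + N is in [0, N)
    have e1 : ((a₂ : ℤ) - b₁) % N = (a₂ : ℤ) - b₁ :=
      Int.emod_eq_of_lt (by omega) (by omega)
    have e2 : ((a₁ : ℤ) - b₂) % N = (a₁ : ℤ) - b₂ + N := by
      have : ((a₁ : ℤ) - b₂ + N * 1) % N = ((a₁ : ℤ) - b₂) % N := Int.add_mul_emod_self_left ..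
      rw [mul_one] at this
      rw [← this]
      exact Int.emod_eq_of_lt (by omega) (by omega)
    rw [e1] at hsep₁
    rw [e2] at hsep₂
    rcases hkbound with h | h | h <;> subst h <;> push_cast at hk <;> omega
  · -- b₂ < a₁
    have e1 : ((a₁ : ℤ) - b₂) % N = (a₁ : ℤ) - b₂ :=
      Int.emod_eq_of_lt (by omega) (by omega)
    have e2 : ((a₂ : ℤ) - b₁) % N = (a₂ : ℤ) - b₁ + N := by
      have : ((a₂ : ℤ) - b₁ + N * 1) % N = ((a₂ : ℤ) - b₁) % N := Int.add_mul_emod_self_left ..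
      rw [mul_one] at this
      rw [← this]
      exact Int.emod_eq_of_lt (by omega) (by omega)
    rw [e1] at hsep₂
    rw [e2] at hsep₁
    rcases hkbound with h | h | h <;> subst h <;> push_cast at hk <;> omega
end

section
/- Let N ≥ 2, and suppose x, x' : Z/NZ → C are nowhere vanishing with |x[n]| = |x'[n]| for all n, and x[n]·conj(x[n-d]) = x'[n]·conj(x'[n-d]) for all n ∈ Z/NZ, where gcd(N, d) = 1. Then there exists a unimodular constant c with x'[n] = c·x[n] for all n. -/
/-- Phase propagation: if two nowhere-vanishing signals have equal magnitudes and equal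
relative products at a stride `d` coprime to `N`, they agree up to a unimodular constant. -/
theorem eq_up_to_phase_of_abs_and_stride_products (N d : ℕ) (hN : 2 ≤ N)
    (hcop : Nat.Coprime N d) [NeZero N] (x x' : ZMod N → ℂ)
    (hx : ∀ n : ZMod N, x n ≠ 0) (hx' : ∀ n : ZMod N, x' n ≠ 0)
    (habs : ∀ n : ZMod N, ‖x n‖ = ‖x' n‖)
    (hprod : ∀ n : ZMod N,
      x n * (starRingEnd ℂ) (x (n - (d : ZMod N))) =
        x' n * (starRingEnd ℂ) (x' (n - (d : ZMod N)))) :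
    ∃ c : ℂ, ‖c‖ = 1 ∧ ∀ n : ZMod N, x' n = c * x n := by
  set r : ZMod N → ℂ := fun n => x' n / x n with hr
  have hrnorm : ∀ n, ‖r n‖ = 1 := by
    intro n
    rw [hr]
    simp only [norm_div, ← habs n]
    exact div_self (by simpa using hx n)
  -- r n = r (n - d)
  have hstep : ∀ n : ZMod N, r n = r (n - (d : ZMod N)) := by
    intro n
    have h := hprod n
    have hxne := hx (n - (d : ZMod N))
    have hx'ne := hx' (n - (d : ZMod N))
    have hinv : (r (n - (d : ZMod N)))⁻¹ = (starRingEnd ℂ) (r (n - (d : ZMod N))) :=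
      Complex.inv_eq_conj (hrnorm _)
    have hc' : (starRingEnd ℂ) (x' (n - (d : ZMod N))) ≠ 0 := by simpa using hx'ne
    have h1 : r n = (starRingEnd ℂ) (x (n - (d : ZMod N))) /
        (starRingEnd ℂ) (x' (n - (d : ZMod N))) := by
      rw [hr]
      have hxn := hx n
      field_simp
      linear_combination -h
    have h2 : x (n - (d : ZMod N)) / x' (n - (d : ZMod N)) = (r (n - (d : ZMod N)))⁻¹ := by
      rw [hr]; simp [inv_div]
    rw [h1, ← map_div₀, h2, hinv, Complex.conj_conj]
  -- r (n + d) = r n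
  have hstep' : ∀ n : ZMod N, r (n + (d : ZMod N)) = r n := by
    intro n
    have := hstep (n + (d : ZMod N))
    simpa using this
  -- r (k * d) = r 0 for all naturals k
  have hk : ∀ k : ℕ, r ((k : ZMod N) * (d : ZMod N)) = r 0 := by
    intro k
    induction k with
    | zero => simp
    | succ m ih =>
      push_cast
      rw [add_mul, one_mul, hstep', ih]
  -- every element is k * d
  have hconst : ∀ n : ZMod N, r n = r 0 := by
    intro n
    have hu : IsUnit (d : ZMod N) := (ZMod.isUnit_iff_coprime d N).mpr hcop.symm
    obtain ⟨u, hu⟩ := hu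
    obtain ⟨k, hkeq⟩ := ZMod.natCast_zmod_surjective (n * ((u⁻¹ : (ZMod N)ˣ) : ZMod N))
    have : n = (k : ZMod N) * (d : ZMod N) := by
      rw [hkeq, ← hu, mul_assoc]
      simp
    rw [this, hk]
  refine ⟨r 0, hrnorm 0, fun n => ?_⟩
  exact (div_eq_iff (hx n)).mp (hconst n)
end
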